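/- arXiv:1212.0678 — 4 statements merged into one kernel-verified Lean document; each statement's English description precedes it below -/
import Mathlib

section
/- If f(ζ) = Σ_{k=0}^N a_k ζ^{k+1} is a polynomial that is injective and holomorphic on a neighborhood of the closed unit disk with f(0)=0, and Ω = f(𝔻), then the harmonic moments of Ω are given by Richardson's formula: M_k = Σ (j_0+1) a_{j_0} ⋯ a_{j_k} · conj(a_{j_0+⋯+j_k+k}), where the sum runs over all multi-indices (j_0,…,j_k) ≥ (0,…,0), with the convention a_j = 0 for j > N. -/
open MeasureTheory ComplexConjugate

open Real in
lemma richardson_angular_int (l : ℤ) (hl : l ≠ 0) :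
    ∫ θ in Set.Ioo (-π) π, Complex.exp ((l : ℂ) * θ * Complex.I) = 0 := by
  have hle : (-π : ℝ) ≤ π := by linarith [Real.pi_pos]
  rw [← MeasureTheory.integral_Ioc_eq_integral_Ioo, ← intervalIntegral.integral_of_le hle]
  have hc : ((l : ℂ) * Complex.I) ≠ 0 := by
    simp [Complex.ext_iff, hl]
  have h0 : ∀ θ : ℝ, (l : ℂ) * θ * Complex.I = ((l:ℂ) * Complex.I) * θ := by intro θ; ring
  simp_rw [h0]
  rw [integral_exp_mul_complex hc]
  have h1 : ∀ s : ℝ, (l : ℂ) * Complex.I * s = (l : ℤ) * ((s:ℂ) * Complex.I) := by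
    intro s; ring
  rw [h1, h1]
  rw [Complex.exp_int_mul, Complex.exp_int_mul]
  push_cast
  rw [Complex.exp_mul_I, Complex.exp_mul_I]
  simp [← Complex.ofReal_cos, ← Complex.ofReal_sin]

open Real in
lemma richardson_radial_int (j : ℕ) :
    ∫ r in Set.Ioo (0:ℝ) 1, ((r : ℂ)) ^ j = 1 / (j + 1) := by
  have h0 : ∀ r : ℝ, ((r:ℂ))^j = ((r ^ j : ℝ) : ℂ) := by intro r; push_cast; ring
  simp_rw [h0]
  rw [← MeasureTheory.integral_Ioc_eq_integral_Ioo,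
    ← intervalIntegral.integral_of_le (zero_le_one), intervalIntegral.integral_ofReal,
    integral_pow]
  push_cast
  simp

open Real in
lemma richardson_disk_orth (m n : ℕ) :
    ∫ z in Metric.ball (0:ℂ) 1, z ^ m * (conj z) ^ n
      = if m = n then ((π : ℂ) / (m + 1)) else 0 := by
  have h1 : ∫ z in Metric.ball (0:ℂ) 1, z ^ m * (conj z) ^ n
      = ∫ z, Set.indicator (Metric.ball (0:ℂ) 1) (fun z => z ^ m * (conj z)^n) z :=
    (integral_indicator measurableSet_ball).symm
  rw [h1, ← Complex.integral_comp_polarCoord_symm]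
  have hcong : Set.EqOn
      (fun p : ℝ × ℝ => p.1 • Set.indicator (Metric.ball (0:ℂ) 1)
        (fun z => z ^ m * (conj z)^n) (Complex.polarCoord.symm p))
      (fun p : ℝ × ℝ => Set.indicator (Set.Ioo (0:ℝ) 1 ×ˢ Set.Ioo (-π) π)
        (fun q : ℝ × ℝ => ((q.1:ℂ)) ^ (m+n+1) *
          Complex.exp (((m:ℂ) - (n:ℂ)) * q.2 * Complex.I)) p)
      polarCoord.target := by
    intro p hp
    have hp' : p ∈ Set.Ioi (0:ℝ) ×ˢ Set.Ioo (-π) π := hp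
    obtain ⟨hp1, hp2⟩ := hp'
    simp only [Set.mem_Ioi] at hp1
    dsimp only
    have habs : ‖Complex.polarCoord.symm p‖ = p.1 := by
      rw [Complex.norm_polarCoord_symm, abs_of_pos hp1]
    have hmem : Complex.polarCoord.symm p ∈ Metric.ball (0:ℂ) 1 ↔ p.1 < 1 := by
      rw [Metric.mem_ball, dist_zero_right, habs]
    have hsymm : Complex.polarCoord.symm p = (p.1 : ℂ) * Complex.exp ((p.2:ℂ) * Complex.I) := by
      rw [Complex.polarCoord_symm_apply, Complex.exp_mul_I, ← Complex.ofReal_cos,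
        ← Complex.ofReal_sin]
    by_cases h : p.1 < 1
    · have hmemP : p ∈ Set.Ioo (0:ℝ) 1 ×ˢ Set.Ioo (-π) π := ⟨⟨hp1, h⟩, hp2⟩
      rw [Set.indicator_of_mem (hmem.mpr h), Set.indicator_of_mem hmemP]
      rw [hsymm, map_mul, ← Complex.exp_conj]
      simp only [map_mul, Complex.conj_ofReal, Complex.conj_I]
      rw [Complex.real_smul]
      rw [mul_pow, mul_pow, ← Complex.exp_nat_mul, ← Complex.exp_nat_mul]
      rw [show ((p.1:ℂ) * ((p.1:ℂ)^m * Complex.exp (↑m * (↑p.2 * Complex.I)) * ((p.1:ℂ)^n *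
        Complex.exp (↑n * (↑p.2 * (-Complex.I)))))) = ((p.1:ℂ)^(m+n+1) *
        (Complex.exp (↑m * (↑p.2 * Complex.I)) * Complex.exp (↑n * (↑p.2 * (-Complex.I))))) from by ring,
        ← Complex.exp_add,
        show ((m:ℂ) * ((p.2:ℂ) * Complex.I) + (n:ℂ) * ((p.2:ℂ) * (-Complex.I))) = ((m:ℂ) - (n:ℂ)) * ↑p.2 * Complex.I from by ring]
    · have hmemP : p ∉ Set.Ioo (0:ℝ) 1 ×ˢ Set.Ioo (-π) π := by
        intro hc; exact h hc.1.2
      rw [Set.indicator_of_notMem (fun hc => h (hmem.mp hc)), Set.indicator_of_notMem hmemP,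
        smul_zero]
  rw [setIntegral_congr_fun polarCoord.open_target.measurableSet hcong]
  rw [setIntegral_indicator (measurableSet_Ioo.prod measurableSet_Ioo)]
  have hsub : polarCoord.target ∩ (Set.Ioo (0:ℝ) 1 ×ˢ Set.Ioo (-π) π)
      = Set.Ioo (0:ℝ) 1 ×ˢ Set.Ioo (-π) π := by
    ext p
    constructor
    · rintro ⟨-, h2⟩; exact h2
    · rintro ⟨h1, h2⟩; exact ⟨⟨h1.1, h2⟩, h1, h2⟩
  rw [hsub, Measure.volume_eq_prod,
    setIntegral_prod_mul (fun r : ℝ => ((r:ℂ))^(m+n+1))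
      (fun θ : ℝ => Complex.exp (((m:ℂ)-(n:ℂ)) * θ * Complex.I)), richardson_radial_int]
  by_cases hmn : m = n
  · subst hmn
    simp only [sub_self, zero_mul, Complex.exp_zero, if_true]
    rw [setIntegral_const, measureReal_def, Real.volume_Ioo]
    have hm1 : ((m:ℂ) + m + 1 + 1) ≠ 0 := by
      intro hc
      have h2 : ((m:ℂ) + m + 1 + 1).re = 0 := by rw [hc]; simp
      simp at h2
      nlinarith [Nat.cast_nonneg (α := ℝ) m]
    have hm2 : ((m:ℂ) + 1) ≠ 0 := by
      intro hc
      have h2 : ((m:ℂ) + 1).re = 0 := by rw [hc]; simp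
      simp at h2
      nlinarith [Nat.cast_nonneg (α := ℝ) m]
    rw [ENNReal.toReal_ofReal (by linarith [Real.pi_pos]),
      show (π - -π : ℝ) = 2 * π from by ring]
    push_cast
    rw [Complex.real_smul]
    push_cast
    field_simp
    rw [div_eq_one_iff_eq (by rw [show (m:ℂ) * (1 + 1) + 1 + 1 = m + m + 1 + 1 by ring]; exact hm1)]
    ring
  · have hl : ((m:ℤ) - n) ≠ 0 := by
      intro hc; exact hmn (by omega)
    have h2 : ∀ θ : ℝ, ((m:ℂ) - (n:ℂ)) * θ * Complex.I = (((m:ℤ) - n : ℤ):ℂ) * θ * Complex.I := by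
      intro θ; push_cast; ring
    simp_rw [h2]
    rw [richardson_angular_int _ hl]
    simp [hmn]

lemma richardson_det_mul_c (c : ℂ) :
    (((1 : ℂ →L[ℂ] ℂ).smulRight c).restrictScalars ℝ).det = Complex.normSq c := by
  rw [ContinuousLinearMap.det, ← LinearMap.det_toMatrix Complex.basisOneI, Matrix.det_fin_two]
  simp [LinearMap.toMatrix_apply, Complex.coe_basisOneI, Complex.normSq_apply]

lemma richardson_expand (N k : ℕ) (a : ℕ → ℂ) (w : ℂ) :
    (∑ j ∈ Finset.range (N+1), a j * w ^ (j+1)) ^ k *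
      (∑ j ∈ Finset.range (N+1), ((j:ℂ)+1) * a j * w ^ j)
    = ∑ p ∈ Fintype.piFinset (fun _ : Fin (k+1) => Finset.range (N+1)),
        ((p 0 : ℂ) + 1) * (∏ i, a (p i)) * w ^ ((∑ i, p i) + k) := by
  have h1 : (∑ j ∈ Finset.range (N+1), a j * w ^ (j+1)) ^ k *
      (∑ j ∈ Finset.range (N+1), ((j:ℂ)+1) * a j * w ^ j)
      = ∏ i : Fin (k+1), ∑ j ∈ Finset.range (N+1),
          (if i = 0 then ((j:ℂ)+1) * a j * w ^ j else a j * w ^ (j+1)) := by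
    rw [Fin.prod_univ_succ]
    have e0 : (∑ j ∈ Finset.range (N+1), if (0 : Fin (k+1)) = 0 then ((j:ℂ)+1) * a j * w ^ j
        else a j * w ^ (j+1)) = ∑ j ∈ Finset.range (N+1), ((j:ℂ)+1) * a j * w ^ j := by
      simp
    have es : (∏ i : Fin k, ∑ j ∈ Finset.range (N+1), if (i.succ : Fin (k+1)) = 0
        then ((j:ℂ)+1) * a j * w ^ j else a j * w ^ (j+1))
        = (∑ j ∈ Finset.range (N+1), a j * w ^ (j+1)) ^ k := by
      simp [Fin.succ_ne_zero, Finset.prod_const, Finset.card_univ]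
    rw [e0, es]
    ring
  rw [h1, Finset.prod_univ_sum]
  refine Finset.sum_congr rfl (fun p hp => ?_)
  rw [Fin.prod_univ_succ, if_pos rfl]
  simp only [Fin.succ_ne_zero, if_false]
  rw [Finset.prod_mul_distrib, Finset.prod_pow_eq_pow_sum]
  rw [Fin.prod_univ_succ (fun i => a (p i)), Fin.sum_univ_succ (fun i => p i)]
  have hsum : ∑ i : Fin k, (p i.succ + 1) = (∑ i : Fin k, p i.succ) + k := by
    rw [Finset.sum_add_distrib, Finset.sum_const, Finset.card_univ, Fintype.card_fin, smul_eq_mul,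
      mul_one]
  rw [hsum]
  simp only [pow_add]
  ring

/-- **Richardson's formula.** If `f(ζ) = Σ_{k=0}^N a_k ζ^{k+1}` is a polynomial which is
injective (univalent) on a neighborhood of the closed unit disk, with `f(0) = 0`, and
`Ω = f(𝔻)`, then the harmonic moments `M_k = (1/π)∫_Ω z^k dm(z)` are given by
`M_k = Σ (j_0+1) a_{j_0} ⋯ a_{j_k} conj(a_{j_0+⋯+j_k+k})`, the sum being over all
multi-indices `(j_0,…,j_k) ≥ (0,…,0)`, with the convention `a_j = 0` for `j > N`. -/
theorem richardson_formula (N : ℕ) (a : ℕ → ℂ) (ha : ∀ j, N < j → a j = 0)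
    (f : ℂ → ℂ) (hf : ∀ ζ, f ζ = ∑ k ∈ Finset.range (N + 1), a k * ζ ^ (k + 1))
    (ε : ℝ) (hε : 0 < ε) (hinj : Set.InjOn f (Metric.closedBall (0 : ℂ) (1 + ε)))
    (k : ℕ) :
    (1 / (Real.pi : ℂ)) * ∫ z in f '' Metric.ball (0 : ℂ) 1, z ^ k =
      ∑ᶠ j : Fin (k + 1) → ℕ,
        ((j 0 : ℂ) + 1) * (∏ i, a (j i)) * conj (a ((∑ i, j i) + k)) := by
  classical
  have hπ : (Real.pi : ℂ) ≠ 0 := Complex.ofReal_ne_zero.mpr Real.pi_ne_zero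
  set T := Fintype.piFinset (fun _ : Fin (k+1) => Finset.range (N+1)) with hT
  set g : ℂ → ℂ := fun w => ∑ j ∈ Finset.range (N+1), ((j:ℂ)+1) * a j * w ^ j with hg
  -- derivative of f
  have hderiv : ∀ w : ℂ, HasDerivAt f (g w) w := by
    intro w
    have h2 : HasDerivAt (fun ζ : ℂ => ∑ j ∈ Finset.range (N+1), a j * ζ ^ (j+1))
        (∑ j ∈ Finset.range (N+1), ((j:ℂ)+1) * a j * w ^ j) w := by
      apply HasDerivAt.fun_sum
      intro j hj
      have h := (hasDerivAt_pow (j+1) w).const_mul (a j)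
      convert h using 1
      · rfl
      push_cast
      ring_nf
    have hfe : f = fun ζ : ℂ => ∑ j ∈ Finset.range (N+1), a j * ζ ^ (j+1) := funext hf
    rw [hfe]
    exact h2
  -- injectivity on the ball
  have hinj' : Set.InjOn f (Metric.ball (0:ℂ) 1) := by
    apply hinj.mono
    intro z hz
    rw [Metric.mem_ball] at hz
    rw [Metric.mem_closedBall]
    linarith
  -- change of variables
  have hF' : ∀ w ∈ Metric.ball (0:ℂ) 1, HasFDerivWithinAt f
      (((1 : ℂ →L[ℂ] ℂ).smulRight (g w)).restrictScalars ℝ) (Metric.ball (0:ℂ) 1) w :=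
    fun w _ => (((hderiv w).hasFDerivAt).restrictScalars ℝ).hasFDerivWithinAt
  have hchg : ∫ z in f '' Metric.ball (0:ℂ) 1, z ^ k
      = ∫ w in Metric.ball (0:ℂ) 1,
          |((((1 : ℂ →L[ℂ] ℂ).smulRight (g w)).restrictScalars ℝ)).det| • (f w) ^ k :=
    integral_image_eq_integral_abs_det_fderiv_smul volume measurableSet_ball hF' hinj' _
  -- rewrite the integrand
  have hcong : Set.EqOn
      (fun w => |((((1 : ℂ →L[ℂ] ℂ).smulRight (g w)).restrictScalars ℝ)).det| • (f w) ^ k)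
      (fun w => ∑ p ∈ T, ∑ n ∈ Finset.range (N+1),
        (((p 0 : ℂ) + 1) * (∏ i, a (p i)) * (((n:ℂ)+1) * conj (a n)))
          * (w ^ ((∑ i, p i) + k) * (conj w) ^ n))
      (Metric.ball (0:ℂ) 1) := by
    intro w _
    dsimp only
    rw [richardson_det_mul_c, abs_of_nonneg (Complex.normSq_nonneg _)]
    have h3 : (Complex.normSq (g w) : ℝ) • (f w) ^ k
        = ((f w) ^ k * g w) * conj (g w) := by
      rw [Complex.real_smul, ← Complex.mul_conj]
      ring
    rw [h3, hf, hg, richardson_expand]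
    have h4 : conj (∑ j ∈ Finset.range (N+1), ((j:ℂ)+1) * a j * w ^ j)
        = ∑ n ∈ Finset.range (N+1), ((n:ℂ)+1) * conj (a n) * (conj w) ^ n := by
      rw [map_sum]
      refine Finset.sum_congr rfl (fun n _ => ?_)
      simp [map_mul, map_pow]
    rw [h4, Finset.sum_mul_sum]
    refine Finset.sum_congr rfl (fun p _ => Finset.sum_congr rfl (fun n _ => ?_))
    ring
  rw [hchg, setIntegral_congr_fun measurableSet_ball hcong]
  -- integrability of monomials
  have hIO : ∀ (m n : ℕ) (c : ℂ), IntegrableOn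
      (fun w : ℂ => c * (w ^ m * (conj w) ^ n)) (Metric.ball (0:ℂ) 1) volume := by
    intro m n c
    have hcont : Continuous (fun w : ℂ => c * (w ^ m * (conj w) ^ n)) :=
      continuous_const.mul ((continuous_pow m).mul (Complex.continuous_conj.pow n))
    exact (hcont.continuousOn.integrableOn_compact (isCompact_closedBall 0 1)).mono_set
      Metric.ball_subset_closedBall
  -- pull the finite sums out of the integral
  rw [integral_finset_sum T (fun p _ => integrable_finset_sum _
    (fun n _ => hIO ((∑ i, p i) + k) n _))]
  have hswap : ∀ p ∈ T, ∫ w in Metric.ball (0:ℂ) 1, ∑ n ∈ Finset.range (N+1),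
      (((p 0 : ℂ) + 1) * (∏ i, a (p i)) * (((n:ℂ)+1) * conj (a n)))
        * (w ^ ((∑ i, p i) + k) * (conj w) ^ n)
      = ((p 0 : ℂ) + 1) * (∏ i, a (p i)) * ((Real.pi : ℂ) * conj (a ((∑ i, p i) + k))) := by
    intro p _
    rw [integral_finset_sum _ (fun n _ => hIO ((∑ i, p i) + k) n _)]
    have h5 : ∀ n ∈ Finset.range (N+1),
        (∫ w in Metric.ball (0:ℂ) 1, (((p 0 : ℂ) + 1) * (∏ i, a (p i)) * (((n:ℂ)+1) * conj (a n)))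
          * (w ^ ((∑ i, p i) + k) * (conj w) ^ n))
        = (((p 0 : ℂ) + 1) * (∏ i, a (p i)) * (((n:ℂ)+1) * conj (a n)))
          * (if (∑ i, p i) + k = n
              then ((Real.pi : ℂ) / (((((∑ i, p i) + k : ℕ)) : ℂ) + 1)) else 0) := by
      intro n _
      rw [integral_const_mul, richardson_disk_orth]
    rw [Finset.sum_congr rfl h5]
    set m := (∑ i, p i) + k with hm
    have h6 : ∀ n : ℕ, ((((p 0 : ℂ) + 1) * (∏ i, a (p i)) * (((n:ℂ)+1) * conj (a n)))
        * (if m = n then ((Real.pi : ℂ) / ((m : ℂ) + 1)) else 0))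
        = if m = n then (((p 0 : ℂ) + 1) * (∏ i, a (p i)) * (((n:ℂ)+1) * conj (a n))
            * ((Real.pi : ℂ) / ((m : ℂ) + 1))) else 0 := by
      intro n
      split <;> simp
    simp_rw [h6]
    rw [Finset.sum_ite_eq (Finset.range (N+1)) m
      (fun n => (((p 0 : ℂ) + 1) * (∏ i, a (p i)) * (((n:ℂ)+1) * conj (a n))
        * ((Real.pi : ℂ) / ((m : ℂ) + 1))))]
    have hm1 : ((m : ℂ) + 1) ≠ 0 := Nat.cast_add_one_ne_zero m
    by_cases hmN : m ∈ Finset.range (N+1)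
    · rw [if_pos hmN]
      field_simp
    · rw [if_neg hmN]
      have hz : a m = 0 := ha m (by simpa [Finset.mem_range, Nat.lt_succ_iff] using hmN)
      simp [hz]
  rw [Finset.sum_congr rfl hswap, Finset.mul_sum]
  have hfin : (∑ᶠ j : Fin (k + 1) → ℕ,
      ((j 0 : ℂ) + 1) * (∏ i, a (j i)) * conj (a ((∑ i, j i) + k)))
      = ∑ p ∈ T, ((p 0 : ℂ) + 1) * (∏ i, a (p i)) * conj (a ((∑ i, p i) + k)) := by
    apply finsum_eq_finset_sum_of_support_subset
    intro j hj
    simp only [Function.mem_support] at hj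
    by_contra hjT
    apply hj
    rw [Finset.mem_coe, hT, Fintype.mem_piFinset] at hjT
    push_neg at hjT
    obtain ⟨i, hi⟩ := hjT
    have hz : a (j i) = 0 := ha _ (by simp only [Finset.mem_range, Nat.lt_succ_iff] at hi; omega)
    rw [Finset.prod_eq_zero (Finset.mem_univ i) hz]
    ring
  rw [hfin]
  refine Finset.sum_congr rfl (fun p _ => ?_)
  field_simp
end

section
/- Let f and g be rational functions on the Riemann sphere such that the meromorphic resultants Res(f,g) and Res(g,f) are both defined (no indeterminate products of zeros and poles occur). Then Res(f,g) = Res(g,f). -/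
private lemma zpow_sum_aux {α : Type*} (a : ℂ) (ha : a ≠ 0) (s : Finset α) (n : α → ℤ) :
    a ^ (∑ i ∈ s, n i) = ∏ i ∈ s, a ^ n i := by
  classical
  induction s using Finset.induction_on with
  | empty => simp
  | insert _ _ h ih => rw [Finset.sum_insert h, Finset.prod_insert h, zpow_add₀ ha, ih]

/-- **Symmetry of the meromorphic resultant (Weil reciprocity on ℙ¹).**
Let `f` and `g` be rational functions on the Riemann sphere, written as
`f(ζ) = c ∏_p (ζ - p)^{D p}` and `g(ζ) = d ∏_q (ζ - q)^{E q}` where the divisors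
`D, E : ℂ →₀ ℤ` have total degree `0` (so there is no zero or pole at `∞`).
If the divisors have disjoint supports (so that both resultants
`Res(f,g) = g((f)) = ∏_p g(p)^{D p}` and `Res(g,f) = f((g)) = ∏_q f(q)^{E q}`
are defined, with no indeterminate products of zeros and poles),
then `Res(f,g) = Res(g,f)`. -/
theorem meromorphic_resultant_symm (D E : ℂ →₀ ℤ) (c d : ℂ) (hc : c ≠ 0) (hd : d ≠ 0)
    (hD : D.sum (fun _ n => n) = 0) (hE : E.sum (fun _ n => n) = 0)
    (hdisj : Disjoint D.support E.support)
    (f g : ℂ → ℂ)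
    (hf : ∀ ζ, f ζ = c * ∏ p ∈ D.support, (ζ - p) ^ (D p))
    (hg : ∀ ζ, g ζ = d * ∏ q ∈ E.support, (ζ - q) ^ (E q)) :
    ∏ p ∈ D.support, g p ^ (D p) = ∏ q ∈ E.support, f q ^ (E q) := by
  classical
  set S := D.support with hS
  set T := E.support with hT
  rw [Finsupp.sum] at hD hE
  have hsub : ∀ p ∈ S, ∀ q ∈ T, p - q ≠ 0 := by
    intro p hp q hq
    intro h
    have : p = q := by linear_combination h
    exact (Finset.disjoint_left.1 hdisj hp) (this ▸ hq)
  -- LHS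
  have key1 : (∏ p ∈ S, g p ^ (D p)) = ∏ p ∈ S, ∏ q ∈ T, (p - q) ^ (D p * E q) := by
    have : (∏ p ∈ S, g p ^ (D p))
        = (∏ p ∈ S, d ^ D p) * ∏ p ∈ S, ∏ q ∈ T, (p - q) ^ (D p * E q) := by
      rw [← Finset.prod_mul_distrib]
      refine Finset.prod_congr rfl fun p hp => ?_
      rw [hg p, mul_zpow, ← Finset.prod_zpow]
      congr 1
      refine Finset.prod_congr rfl fun q hq => ?_
      rw [← zpow_mul, Int.mul_comm]
    rw [this, ← zpow_sum_aux d hd, hD, zpow_zero, one_mul]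
  -- RHS
  have key2 : (∏ q ∈ T, f q ^ (E q)) = ∏ p ∈ S, ∏ q ∈ T, (p - q) ^ (D p * E q) := by
    have step : (∏ q ∈ T, f q ^ (E q))
        = (∏ q ∈ T, c ^ E q) * ∏ q ∈ T, ∏ p ∈ S, (q - p) ^ (D p * E q) := by
      rw [← Finset.prod_mul_distrib]
      refine Finset.prod_congr rfl fun q hq => ?_
      rw [hf q, mul_zpow, ← Finset.prod_zpow]
      congr 1
      refine Finset.prod_congr rfl fun p hp => ?_
      rw [← zpow_mul, Int.mul_comm]
    rw [step, ← zpow_sum_aux c hc, hE, zpow_zero, one_mul, Finset.prod_comm]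
    have sign : ∀ p ∈ S, ∀ q ∈ T,
        (q - p) ^ (D p * E q) = (-1 : ℂ) ^ (D p * E q) * (p - q) ^ (D p * E q) := by
      intro p hp q hq
      rw [← mul_zpow]
      congr 1
      ring
    calc (∏ p ∈ S, ∏ q ∈ T, (q - p) ^ (D p * E q))
        = ∏ p ∈ S, ∏ q ∈ T, ((-1 : ℂ) ^ (D p * E q) * (p - q) ^ (D p * E q)) := by
          exact Finset.prod_congr rfl fun p hp =>
            Finset.prod_congr rfl fun q hq => sign p hp q hq
      _ = (∏ p ∈ S, ∏ q ∈ T, (-1 : ℂ) ^ (D p * E q)) *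
            ∏ p ∈ S, ∏ q ∈ T, (p - q) ^ (D p * E q) := by
          rw [← Finset.prod_mul_distrib]
          exact Finset.prod_congr rfl fun p hp => Finset.prod_mul_distrib
      _ = ∏ p ∈ S, ∏ q ∈ T, (p - q) ^ (D p * E q) := by
          have : (∏ p ∈ S, ∏ q ∈ T, (-1 : ℂ) ^ (D p * E q)) = 1 := by
            have hm1 : (-1 : ℂ) ≠ 0 := by norm_num
            calc (∏ p ∈ S, ∏ q ∈ T, (-1 : ℂ) ^ (D p * E q))
                = ∏ p ∈ S, (-1 : ℂ) ^ (∑ q ∈ T, D p * E q) := by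
                  exact Finset.prod_congr rfl fun p hp => (zpow_sum_aux _ hm1 _ _).symm
              _ = ∏ p ∈ S, (-1 : ℂ) ^ (D p * ∑ q ∈ T, E q) := by
                  exact Finset.prod_congr rfl fun p hp => by rw [Finset.mul_sum]
              _ = 1 := by
                  rw [hE]
                  simp
          rw [this, one_mul]
  rw [key1, key2]
end

section
/- Let μ and ν be signed measures on the Riemann sphere of zero net mass given by the divisors of rational functions f and g respectively, i.e., μ = Σ δ-masses at zeros of f minus poles of f, and similarly for ν, with the supports of μ and ν disjoint. Then the mutual logarithmic energy satisfies I(μ,ν) = ∫∫ log(1/|z-ζ|) dμ(z) dν(ζ) = -log|Res(f,g)|. -/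
/-- Let `μ` and `ν` be signed measures on the Riemann sphere of zero net mass given by the
divisors `D, E : ℂ →₀ ℤ` of the rational functions `f(z) = ∏_p (z-p)^{D p}` and
`g(z) = ∏_q (z-q)^{E q}` (δ-masses at zeros minus poles), with disjoint supports.
Then the mutual logarithmic energy satisfies
`I(μ,ν) = ∫∫ log(1/|z-ζ|) dμ(z) dν(ζ) = -log|Res(f,g)|`, where
`Res(f,g) = ∏_p g(p)^{D p}`. -/
theorem mutual_energy_eq_neg_log_resultant (D E : ℂ →₀ ℤ)
    (hD : D.sum (fun _ n => n) = 0) (hE : E.sum (fun _ n => n) = 0)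
    (hdisj : Disjoint D.support E.support)
    (f g : ℂ → ℂ)
    (hf : ∀ z, f z = ∏ p ∈ D.support, (z - p) ^ (D p))
    (hg : ∀ z, g z = ∏ q ∈ E.support, (z - q) ^ (E q)) :
    ∑ p ∈ D.support, ∑ q ∈ E.support,
        ((D p : ℝ) * (E q : ℝ)) * Real.log (1 / ‖p - q‖) =
      - Real.log (‖∏ p ∈ D.support, g p ^ (D p)‖) := by
  have hpq : ∀ p ∈ D.support, ∀ q ∈ E.support, p - q ≠ 0 := by
    intro p hp q hq h
    rw [sub_eq_zero] at h
    exact Finset.disjoint_left.mp hdisj hp (h ▸ hq)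
  have key : ∀ p ∈ D.support,
      Real.log (‖g p ^ (D p)‖)
        = (D p : ℝ) * ∑ q ∈ E.support, (E q : ℝ) * Real.log (‖p - q‖) := by
    intro p hp
    rw [norm_zpow, Real.log_zpow, hg, norm_prod, Real.log_prod]
    · congr 1
      refine Finset.sum_congr rfl fun q hq => ?_
      rw [norm_zpow, Real.log_zpow]
    · intro q hq
      rw [norm_zpow]
      exact zpow_ne_zero _ (norm_ne_zero_iff.mpr (hpq p hp q hq))
  rw [norm_prod, Real.log_prod, ← Finset.sum_neg_distrib]
  · refine Finset.sum_congr rfl fun p hp => ?_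
    rw [key p hp, Finset.mul_sum, ← Finset.sum_neg_distrib]
    refine Finset.sum_congr rfl fun q hq => ?_
    rw [one_div, Real.log_inv]
    ring
  · intro p hp
    rw [norm_zpow]
    refine zpow_ne_zero _ ?_
    rw [hg]
    simp only [ne_eq, norm_prod]
    refine Finset.prod_ne_zero_iff.mpr fun q hq => ?_
    rw [norm_zpow]
    exact zpow_ne_zero _ (norm_ne_zero_iff.mpr (hpq p hp q hq))
end

section
/- Let F be a rational function, bounded and injective on a bounded domain Ω ⊂ ℂ. Then for z, w outside the closure of F(Ω), the exponential transform satisfies E_{F(Ω)}(z,w) = Π_{α,β ∈ ℙ} E_Ω(α,β)^{D_z(α) D_w(β)}, where D_z and D_w are the divisors (multiplicity functions) of F - z and F - w on the Riemann sphere. -/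
open MeasureTheory ComplexConjugate Polynomial
open Filter Topology

/-- The exponential transform
`E_D(z,w) = exp((1/(2πi)) ∫_D dζ/(ζ-z) ∧ dζ̄/(ζ̄-w̄)) = exp((-1/π) ∫_D dm(ζ)/((ζ-z)(ζ̄-w̄)))`. -/
noncomputable def expTransform (D : Set ℂ) (z w : ℂ) : ℂ :=
  Complex.exp ((-1 / (Real.pi : ℂ)) * ∫ ζ in D, 1 / ((ζ - z) * (conj ζ - conj w)))

private lemma aux_logderiv_multiset (x : ℂ) (m : Multiset ℂ) : ∀ a : ℂ,
    eval x (Polynomial.C a * (m.map fun r => X - Polynomial.C r).prod) ≠ 0 →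
    eval x (derivative (Polynomial.C a * (m.map fun r => X - Polynomial.C r).prod)) /
      eval x (Polynomial.C a * (m.map fun r => X - Polynomial.C r).prod)
      = (m.map fun r => (x - r)⁻¹).sum := by
  induction m using Multiset.induction with
  | empty => intro a h; simp
  | cons r s ih =>
    intro a h
    rw [Multiset.map_cons, Multiset.prod_cons, mul_left_comm] at h ⊢
    have hxr : x - r ≠ 0 := by
      simp only [eval_mul, eval_sub, eval_X, eval_C] at h
      intro h0; rw [h0] at h; simp at h
    have hqx : eval x (Polynomial.C a * (s.map fun r => X - Polynomial.C r).prod) ≠ 0 := by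
      rw [eval_mul] at h
      exact fun h0 => h (by rw [h0, mul_zero])
    rw [Multiset.map_cons, Multiset.sum_cons, ← ih a hqx]
    generalize (Polynomial.C a * (s.map fun r => X - Polynomial.C r).prod) = T at hqx ⊢
    rw [derivative_mul, derivative_sub, derivative_X, derivative_C, sub_zero, one_mul,
      eval_add, eval_mul, eval_mul, eval_sub, eval_X, eval_C]
    field_simp

private lemma aux_logderiv (p : Polynomial ℂ) (hp : p ≠ 0) (x : ℂ) (hx : eval x p ≠ 0) :
    eval x (derivative p) / eval x p =
      ∑ r ∈ p.roots.toFinset, (p.rootMultiplicity r : ℂ) / (x - r) := by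
  have hcard : Multiset.card p.roots = p.natDegree :=
    splits_iff_card_roots.mp (IsAlgClosed.splits p)
  have hps := C_leadingCoeff_mul_prod_multiset_X_sub_C (p := p) hcard
  have h2 : eval x (Polynomial.C p.leadingCoeff *
      (p.roots.map fun r => X - Polynomial.C r).prod) ≠ 0 := by rw [hps]; exact hx
  have h1 := aux_logderiv_multiset x p.roots p.leadingCoeff h2
  rw [hps] at h1
  rw [h1, Finset.sum_multiset_map_count]
  refine Finset.sum_congr rfl fun r _ => ?_
  rw [count_roots, nsmul_eq_mul, div_eq_mul_inv]

private lemma aux_sum_union (A B : Polynomial ℂ) (hA : A ≠ 0) (hB : B ≠ 0) (x : ℂ)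
    (hxA : eval x A ≠ 0) (hxB : eval x B ≠ 0) :
    ∑ α ∈ A.roots.toFinset ∪ B.roots.toFinset,
      (((A.rootMultiplicity α : ℤ) - (B.rootMultiplicity α : ℤ) : ℤ) : ℂ) / (x - α)
    = eval x (derivative A) / eval x A - eval x (derivative B) / eval x B := by
  have key : ∀ (p : Polynomial ℂ), p ≠ 0 →
      p.roots.toFinset ⊆ A.roots.toFinset ∪ B.roots.toFinset → eval x p ≠ 0 →
      ∑ α ∈ A.roots.toFinset ∪ B.roots.toFinset, (p.rootMultiplicity α : ℂ) / (x - α)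
        = eval x (derivative p) / eval x p := by
    intro p hp hS hxp
    rw [aux_logderiv p hp x hxp]
    refine (Finset.sum_subset hS fun r _ hr => ?_).symm
    have : ¬ p.IsRoot r := fun hroot =>
      hr (Multiset.mem_toFinset.mpr ((mem_roots hp).mpr hroot))
    rw [rootMultiplicity_eq_zero this, Nat.cast_zero, zero_div]
  rw [← key A hA Finset.subset_union_left hxA,
    ← key B hB Finset.subset_union_right hxB, ← Finset.sum_sub_distrib]
  refine Finset.sum_congr rfl fun r _ => ?_
  push_cast
  rw [sub_div]

private lemma aux_ratio (P Q : Polynomial ℂ) (c : ℂ) (F : ℂ → ℂ)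
    (hF : ∀ ζ, F ζ = P.eval ζ / Q.eval ζ) (ζ : ℂ)
    (hQζ : eval ζ Q ≠ 0) (hAζ : eval ζ (P - Polynomial.C c * Q) ≠ 0) :
    deriv F ζ / (F ζ - c) =
      eval ζ (derivative (P - Polynomial.C c * Q)) / eval ζ (P - Polynomial.C c * Q)
        - eval ζ (derivative Q) / eval ζ Q := by
  have hFd : HasDerivAt F ((eval ζ (derivative P) * eval ζ Q
      - eval ζ P * eval ζ (derivative Q)) / (eval ζ Q) ^ 2) ζ := by
    have hfe : F = fun t => eval t P / eval t Q := funext hF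
    rw [hfe]
    exact (Polynomial.hasDerivAt P ζ).div (Polynomial.hasDerivAt Q ζ) hQζ
  rw [hFd.deriv, hF ζ, derivative_sub, derivative_C_mul]
  simp only [eval_sub, eval_mul, eval_C] at hAζ ⊢
  have h1 : eval ζ P / eval ζ Q - c = (eval ζ P - c * eval ζ Q) / eval ζ Q := by
    field_simp
  rw [h1]
  rw [div_sub_div _ _ hAζ hQζ, div_div_div_eq,
    div_eq_div_iff (mul_ne_zero (pow_ne_zero 2 hQζ) hAζ) (mul_ne_zero hAζ hQζ)]
  ring

private lemma aux_Q_ne (Ω : Set ℂ) (hΩo : IsOpen Ω)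
    (P Q : Polynomial ℂ) (hQ : Q ≠ 0) (hco : IsCoprime P Q)
    (F : ℂ → ℂ) (hF : ∀ ζ, F ζ = P.eval ζ / Q.eval ζ)
    (hFbdd : ∃ C : ℝ, ∀ ζ ∈ Ω, ‖F ζ‖ ≤ C)
    {α : ℂ} (hα : α ∈ closure Ω) : eval α Q ≠ 0 := by
  intro hQα
  obtain ⟨Cb, hCb⟩ := hFbdd
  have hPα : eval α P ≠ 0 := by
    obtain ⟨u, v, huv⟩ := hco
    intro h0
    have h1 := congrArg (eval α) huv
    simp [h0, hQα] at h1
  set s : Set ℂ := {x | Q.IsRoot x} with hs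
  have hsfin : s.Finite := Polynomial.finite_setOf_isRoot hQ
  have h1 : (𝓝[Ω \ {α}] α).NeBot := by
    rcases em (α ∈ Ω) with hmem | hmem
    · have he : Ω \ {α} = {α}ᶜ ∩ Ω := by rw [Set.diff_eq, Set.inter_comm]
      rw [he, nhdsWithin_inter_of_mem'
        (mem_nhdsWithin_of_mem_nhds (hΩo.mem_nhds hmem))]
      exact Module.punctured_nhds_neBot ℝ ℂ α
    · have he : Ω \ {α} = Ω := Set.diff_singleton_eq_self hmem
      rw [he]
      exact mem_closure_iff_nhdsWithin_neBot.mp hα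
  have h2 : (s \ {α})ᶜ ∈ 𝓝 α := by
    have hcl : IsClosed (s \ {α}) := (hsfin.subset Set.diff_subset).isClosed
    exact hcl.isOpen_compl.mem_nhds (by simp)
  have h3 : (𝓝[(Ω \ {α}) ∩ (s \ {α})ᶜ] α).NeBot := by
    rw [nhdsWithin_inter_of_mem' (mem_nhdsWithin_of_mem_nhds h2)]
    exact h1
  set l := 𝓝[(Ω \ {α}) ∩ (s \ {α})ᶜ] α with hl
  have hev : ∀ᶠ ζ in l, ζ ∈ Ω ∧ eval ζ Q ≠ 0 := by
    filter_upwards [self_mem_nhdsWithin] with ζ hζ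
    refine ⟨hζ.1.1, fun h0 => ?_⟩
    exact hζ.2 ⟨h0, hζ.1.2⟩
  have htend : Tendsto (fun ζ : ℂ => ζ) l (𝓝 α) := nhdsWithin_le_nhds
  have habsP : Tendsto (fun ζ => ‖eval ζ P‖) l (𝓝 (‖eval α P‖)) :=
    ((continuous_norm.comp (Polynomial.continuous P)).tendsto α).comp htend
  have habsQ : Tendsto (fun ζ => ‖eval ζ Q‖) l (𝓝[>] (0 : ℝ)) := by
    rw [tendsto_nhdsWithin_iff]
    constructor
    · have := ((continuous_norm.comp (Polynomial.continuous Q)).tendsto α).comp htend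
      simp only [Function.comp_def] at this
      rw [hQα, norm_zero] at this
      exact this
    · filter_upwards [hev] with ζ hζ
      exact Set.mem_Ioi.mpr (by simpa using hζ.2)
  have hmul : Tendsto (fun ζ => ‖eval ζ P‖ * (‖eval ζ Q‖)⁻¹) l atTop :=
    Tendsto.pos_mul_atTop (by simpa using hPα) habsP habsQ.inv_tendsto_nhdsGT_zero
  have habsF : ∀ ζ, ‖F ζ‖
      = ‖eval ζ P‖ * (‖eval ζ Q‖)⁻¹ := by
    intro ζ
    rw [hF ζ, norm_div, div_eq_mul_inv]
  have hbig := hmul.eventually_gt_atTop Cb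
  obtain ⟨ζ, hb, hmem, hQz⟩ := (hbig.and hev).exists
  have := hCb ζ hmem
  rw [habsF ζ] at this
  exact absurd this (not_le.mpr hb)

private lemma aux_A_ne (Ω : Set ℂ) (P Q : Polynomial ℂ)
    (F : ℂ → ℂ) (hF : ∀ ζ, F ζ = P.eval ζ / Q.eval ζ)
    {α : ℂ} (hα : α ∈ closure Ω) {c : ℂ} (hc : c ∉ closure (F '' Ω))
    (hQα : eval α Q ≠ 0) : eval α (P - Polynomial.C c * Q) ≠ 0 := by
  intro h0
  rw [eval_sub, eval_mul, eval_C, sub_eq_zero] at h0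
  have hFα : F α = c := by rw [hF, h0, mul_div_assoc, div_self hQα, mul_one]
  have hcont : ContinuousWithinAt F Ω α := by
    have : ContinuousAt F α := by
      have h1 : ContinuousAt (fun t => eval t P / eval t Q) α :=
        ((Polynomial.continuous P).continuousAt).div
          ((Polynomial.continuous Q).continuousAt) hQα
      rwa [show F = fun t => eval t P / eval t Q from funext hF]
    exact this.continuousWithinAt
  exact hc (hFα ▸ hcont.mem_closure_image hα)

private lemma aux_integrable (Ω : Set ℂ) (hΩb : Bornology.IsBounded Ω) {α β : ℂ}
    (hα : α ∉ closure Ω) (hβ : β ∉ closure Ω) :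
    IntegrableOn (fun ζ => 1 / ((ζ - α) * (conj ζ - conj β))) Ω := by
  have hcomp : IsCompact (closure Ω) :=
    Metric.isCompact_of_isClosed_isBounded isClosed_closure hΩb.closure
  have hcont : ContinuousOn
      (fun ζ => 1 / ((ζ - α) * (conj ζ - conj β))) (closure Ω) := by
    apply continuousOn_const.div
    · exact ((continuous_id.sub continuous_const).mul
        ((Complex.continuous_conj.sub continuous_const))).continuousOn
    · intro ζ hζ
      apply mul_ne_zero
      · exact sub_ne_zero.mpr (fun h => hα (h ▸ hζ))
      · intro h
        rw [sub_eq_zero] at h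
        exact hβ ((starRingEnd ℂ).injective h ▸ hζ)
  exact (hcont.integrableOn_compact hcomp).mono_set subset_closure

private lemma aux_det (c : ℂ) :
    (ContinuousLinearMap.restrictScalars ℝ
        (ContinuousLinearMap.smulRight (1 : ℂ →L[ℂ] ℂ) c)).det = Complex.normSq c := by
  have h : ((ContinuousLinearMap.restrictScalars ℝ
      (ContinuousLinearMap.smulRight (1 : ℂ →L[ℂ] ℂ) c)) : ℂ →ₗ[ℝ] ℂ)
      = Algebra.lmul ℝ ℂ c := by
    apply LinearMap.ext
    intro x
    simp [mul_comm]
  show LinearMap.det _ = _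
  rw [h, ← Algebra.norm_apply, Algebra.norm_complex_apply]

/-- **Transformation of the exponential transform under rational maps.**
Let `F = P/Q` (with `P, Q` coprime, `Q ≠ 0`) be a rational function which is bounded and
injective on a bounded domain `Ω ⊂ ℂ`. For `c ∈ ℂ`, the divisor `D_c : ℙ → ℤ` of `F - c`
assigns to a finite point `α` the multiplicity `ord_α(P - cQ) - ord_α(Q)`; points of the
Riemann sphere outside the two finite root sets (including `∞`, where `E_Ω(∞,·) = 1`)
contribute trivially to the product below. Then for `z, w` outside the closure of `F(Ω)`:
`E_{F(Ω)}(z,w) = Π_{α,β} E_Ω(α,β)^{D_z(α) D_w(β)}`. -/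
theorem expTransform_rational_image
    (Ω : Set ℂ) (hΩo : IsOpen Ω) (hΩb : Bornology.IsBounded Ω) (hΩc : IsConnected Ω)
    (P Q : Polynomial ℂ) (hQ : Q ≠ 0) (hco : IsCoprime P Q)
    (F : ℂ → ℂ) (hF : ∀ ζ, F ζ = P.eval ζ / Q.eval ζ)
    (hFbdd : ∃ C : ℝ, ∀ ζ ∈ Ω, ‖F ζ‖ ≤ C)
    (hinj : Set.InjOn F Ω)
    (z w : ℂ) (hz : z ∉ closure (F '' Ω)) (hw : w ∉ closure (F '' Ω)) :
    expTransform (F '' Ω) z w =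
      ∏ α ∈ (P - C z * Q).roots.toFinset ∪ Q.roots.toFinset,
        ∏ β ∈ (P - C w * Q).roots.toFinset ∪ Q.roots.toFinset,
          expTransform Ω α β ^
            ((((P - C z * Q).rootMultiplicity α : ℤ) - (Q.rootMultiplicity α : ℤ)) *
             (((P - C w * Q).rootMultiplicity β : ℤ) - (Q.rootMultiplicity β : ℤ))) := by
  obtain ⟨ζ₀, hζ₀⟩ := hΩc.nonempty
  set Az := P - Polynomial.C z * Q with hAzdef
  set Aw := P - Polynomial.C w * Q with hAwdef
  have hsubcl : Ω ⊆ closure Ω := subset_closure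
  have hQcl : ∀ α ∈ closure Ω, eval α Q ≠ 0 := fun α hα =>
    aux_Q_ne Ω hΩo P Q hQ hco F hF hFbdd hα
  have hAzcl : ∀ α ∈ closure Ω, eval α Az ≠ 0 := fun α hα =>
    aux_A_ne Ω P Q F hF hα hz (hQcl α hα)
  have hAwcl : ∀ α ∈ closure Ω, eval α Aw ≠ 0 := fun α hα =>
    aux_A_ne Ω P Q F hF hα hw (hQcl α hα)
  have hAz0 : Az ≠ 0 := fun h => hAzcl ζ₀ (hsubcl hζ₀) (by rw [h, eval_zero])
  have hAw0 : Aw ≠ 0 := fun h => hAwcl ζ₀ (hsubcl hζ₀) (by rw [h, eval_zero])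
  set Sz := Az.roots.toFinset ∪ Q.roots.toFinset with hSz
  set Sw := Aw.roots.toFinset ∪ Q.roots.toFinset with hSw
  have hmem_z : ∀ α ∈ Sz, α ∉ closure Ω := by
    intro α hα hcl
    rcases Finset.mem_union.mp hα with h | h
    · exact hAzcl α hcl ((mem_roots hAz0).mp (Multiset.mem_toFinset.mp h))
    · exact hQcl α hcl ((mem_roots hQ).mp (Multiset.mem_toFinset.mp h))
  have hmem_w : ∀ β ∈ Sw, β ∉ closure Ω := by
    intro β hβ hcl
    rcases Finset.mem_union.mp hβ with h | h
    · exact hAwcl β hcl ((mem_roots hAw0).mp (Multiset.mem_toFinset.mp h))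
    · exact hQcl β hcl ((mem_roots hQ).mp (Multiset.mem_toFinset.mp h))
  -- derivative of F
  have hder : ∀ ζ ∈ Ω, HasDerivAt F (deriv F ζ) ζ := by
    intro ζ hζ
    have hQζ := hQcl ζ (hsubcl hζ)
    have h1 : HasDerivAt F ((eval ζ (derivative P) * eval ζ Q
        - eval ζ P * eval ζ (derivative Q)) / (eval ζ Q) ^ 2) ζ := by
      rw [show F = fun t => eval t P / eval t Q from funext hF]
      exact (Polynomial.hasDerivAt P ζ).div (Polynomial.hasDerivAt Q ζ) hQζ
    exact h1.differentiableAt.hasDerivAt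
  have hfder : ∀ ζ ∈ Ω, HasFDerivWithinAt F
      ((ContinuousLinearMap.smulRight (1 : ℂ →L[ℂ] ℂ) (deriv F ζ)).restrictScalars ℝ) Ω ζ :=
    fun ζ hζ => (((hder ζ hζ).hasFDerivAt).restrictScalars ℝ).hasFDerivWithinAt
  -- the pointwise identity
  have hkey : ∀ ζ ∈ Ω, ((Complex.normSq (deriv F ζ) : ℝ) : ℂ) *
      (1 / ((F ζ - z) * (conj (F ζ) - conj w)))
      = ∑ α ∈ Sz, ∑ β ∈ Sw,
          (((((Az.rootMultiplicity α : ℤ) - (Q.rootMultiplicity α : ℤ)) *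
             (((Aw.rootMultiplicity β : ℤ) - (Q.rootMultiplicity β : ℤ)))) : ℤ) : ℂ) *
            (1 / ((ζ - α) * (conj ζ - conj β))) := by
    intro ζ hζ
    have hQζ := hQcl ζ (hsubcl hζ)
    have hAzζ := hAzcl ζ (hsubcl hζ)
    have hAwζ := hAwcl ζ (hsubcl hζ)
    have hz' : deriv F ζ / (F ζ - z) = ∑ α ∈ Sz,
        ((((Az.rootMultiplicity α : ℤ) - (Q.rootMultiplicity α : ℤ)) : ℤ) : ℂ) / (ζ - α) := by
      rw [aux_ratio P Q z F hF ζ hQζ hAzζ]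
      exact (aux_sum_union Az Q hAz0 hQ ζ hAzζ hQζ).symm
    have hw' : deriv F ζ / (F ζ - w) = ∑ β ∈ Sw,
        ((((Aw.rootMultiplicity β : ℤ) - (Q.rootMultiplicity β : ℤ)) : ℤ) : ℂ) / (ζ - β) := by
      rw [aux_ratio P Q w F hF ζ hQζ hAwζ]
      exact (aux_sum_union Aw Q hAw0 hQ ζ hAwζ hQζ).symm
    have hcj : conj (deriv F ζ / (F ζ - w)) = ∑ β ∈ Sw,
        ((((Aw.rootMultiplicity β : ℤ) - (Q.rootMultiplicity β : ℤ)) : ℤ) : ℂ)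
          / (conj ζ - conj β) := by
      rw [hw', map_sum]
      refine Finset.sum_congr rfl fun β _ => ?_
      rw [map_div₀, map_sub, map_intCast]
    calc ((Complex.normSq (deriv F ζ) : ℝ) : ℂ) *
          (1 / ((F ζ - z) * (conj (F ζ) - conj w)))
        = (deriv F ζ / (F ζ - z)) * (conj (deriv F ζ) / (conj (F ζ) - conj w)) := by
          rw [div_mul_div_comm, ← Complex.mul_conj, mul_one_div]
      _ = (deriv F ζ / (F ζ - z)) * conj (deriv F ζ / (F ζ - w)) := by
          rw [map_div₀, map_sub]
      _ = _ := by
          rw [hz', hcj, Finset.sum_mul_sum]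
          refine Finset.sum_congr rfl fun α _ => Finset.sum_congr rfl fun β _ => ?_
          rw [div_mul_div_comm, mul_one_div]
          push_cast
          ring
  -- change of variables and computation of the integral
  have hInt : ∀ α ∈ Sz, ∀ β ∈ Sw,
      IntegrableOn (fun ζ => 1 / ((ζ - α) * (conj ζ - conj β))) Ω :=
    fun α hα β hβ => aux_integrable Ω hΩb (hmem_z α hα) (hmem_w β hβ)
  have hstep : (∫ ζ in F '' Ω, 1 / ((ζ - z) * (conj ζ - conj w)))
      = ∑ α ∈ Sz, ∑ β ∈ Sw,
          (((((Az.rootMultiplicity α : ℤ) - (Q.rootMultiplicity α : ℤ)) *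
             (((Aw.rootMultiplicity β : ℤ) - (Q.rootMultiplicity β : ℤ)))) : ℤ) : ℂ) *
            ∫ ζ in Ω, 1 / ((ζ - α) * (conj ζ - conj β)) := by
    rw [integral_image_eq_integral_abs_det_fderiv_smul volume hΩo.measurableSet hfder hinj
      (fun u => 1 / ((u - z) * (conj u - conj w)))]
    rw [setIntegral_congr_fun hΩo.measurableSet (f := fun ζ =>
        |(((ContinuousLinearMap.smulRight (1 : ℂ →L[ℂ] ℂ) (deriv F ζ)).restrictScalars ℝ)).det|
          • (1 / ((F ζ - z) * (conj (F ζ) - conj w))))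
      (g := fun ζ => ∑ α ∈ Sz, ∑ β ∈ Sw,
          (((((Az.rootMultiplicity α : ℤ) - (Q.rootMultiplicity α : ℤ)) *
             (((Aw.rootMultiplicity β : ℤ) - (Q.rootMultiplicity β : ℤ)))) : ℤ) : ℂ) *
            (1 / ((ζ - α) * (conj ζ - conj β)))) ?_]
    · rw [integral_finset_sum _ (fun α hα => integrable_finset_sum _
        (fun β hβ => ((hInt α hα β hβ).const_mul _)))]
      refine Finset.sum_congr rfl fun α hα => ?_
      rw [integral_finset_sum _ (fun β hβ => ((hInt α hα β hβ).const_mul _))]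
      exact Finset.sum_congr rfl fun β hβ => integral_const_mul _ _
    · intro ζ hζ
      simp only
      rw [aux_det, abs_of_nonneg (Complex.normSq_nonneg _), Complex.real_smul]
      exact hkey ζ hζ
  -- assembling with the exponential
  simp only [expTransform]
  rw [hstep]
  have hrw : (-1 / (Real.pi : ℂ)) * (∑ α ∈ Sz, ∑ β ∈ Sw,
      (((((Az.rootMultiplicity α : ℤ) - (Q.rootMultiplicity α : ℤ)) *
        (((Aw.rootMultiplicity β : ℤ) - (Q.rootMultiplicity β : ℤ)))) : ℤ) : ℂ) *
        ∫ ζ in Ω, 1 / ((ζ - α) * (conj ζ - conj β)))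
      = ∑ α ∈ Sz, ∑ β ∈ Sw,
        (((((Az.rootMultiplicity α : ℤ) - (Q.rootMultiplicity α : ℤ)) *
          (((Aw.rootMultiplicity β : ℤ) - (Q.rootMultiplicity β : ℤ)))) : ℤ) : ℂ) *
          ((-1 / (Real.pi : ℂ)) * ∫ ζ in Ω, 1 / ((ζ - α) * (conj ζ - conj β))) := by
    rw [Finset.mul_sum]
    refine Finset.sum_congr rfl fun α _ => ?_
    rw [Finset.mul_sum]
    exact Finset.sum_congr rfl fun β _ => by ring
  rw [hrw, Complex.exp_sum]
  refine Finset.prod_congr rfl fun α _ => ?_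
  rw [Complex.exp_sum]
  refine Finset.prod_congr rfl fun β _ => ?_
  rw [Complex.exp_int_mul]
end
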